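/- Let F = x(xy + z^2) ∈ ℂ[x,y,z], a plane cubic of Waring rank 5. Then the forbidden locus of F is the single point [1:0:0] ∈ ℙ^2; that is, for a nonzero triple (a,b,c) ∈ ℂ^3, the linear form ax + by + cz lies in the Waring locus W_F if and only if (b,c) ≠ (0,0). -/

import Mathlib

open MvPolynomial

noncomputable section

/-- The linear form `c₀x₀ + ⋯ + cₙxₙ` with coefficient vector `c`. -/
def lin {σ : Type*} [Fintype σ] (c : σ → ℂ) : MvPolynomial σ ℂ :=
  ∑ i, C (c i) * X i

/-- `F` admits a Waring decomposition `F = L₁^d + ⋯ + L_r^d`. -/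
def HasWaringDecomp {σ : Type*} [Fintype σ] (d : ℕ) (F : MvPolynomial σ ℂ) (r : ℕ) : Prop :=
  ∃ L : Fin r → σ → ℂ, F = ∑ j, lin (L j) ^ d

/-- The Waring rank of `F` (as a form of degree `d`). -/
def waringRank {σ : Type*} [Fintype σ] (d : ℕ) (F : MvPolynomial σ ℂ) : ℕ :=
  sInf {r | HasWaringDecomp d F r}

/-- The linear form with coefficient vector `a` lies in the Waring locus of `F`:
there are linear forms `L₂, …, L_r` with `r = rk F` such that `F` lies in the
`ℂ`-linear span of `L^d, L₂^d, …, L_r^d`. -/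
def InWaringLocus {σ : Type*} [Fintype σ] (d : ℕ) (F : MvPolynomial σ ℂ) (a : σ → ℂ) : Prop :=
  ∃ (c : Fin (waringRank d F) → ℂ) (L : Fin (waringRank d F) → σ → ℂ)
    (j₀ : Fin (waringRank d F)), L j₀ = a ∧ F = ∑ j, c j • lin (L j) ^ d

namespace FL

def Fp : MvPolynomial (Fin 3) ℂ := X 0 * (X 0 * X 1 + X 2 ^ 2)

lemma eval_lin (v u : Fin 3 → ℂ) :
    eval u (lin v) = v 0 * u 0 + v 1 * u 1 + v 2 * u 2 := by
  simp [lin, Fin.sum_univ_three]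

lemma hev_of {n : ℕ} {c : Fin n → ℂ} {L : Fin n → Fin 3 → ℂ}
    (h : Fp = ∑ j, c j • lin (L j) ^ 3) (u0 u1 u2 : ℂ) :
    u0^2*u1 + u0*u2^2 = ∑ j, c j * (L j 0 * u0 + L j 1 * u1 + L j 2 * u2)^3 := by
  have h2 := congrArg (eval ![u0, u1, u2]) h
  simp only [Fp, map_sum, smul_eval, map_pow, map_mul, map_add, eval_X, eval_lin,
    Matrix.cons_val_zero, Matrix.cons_val_one, Matrix.head_cons, Matrix.cons_val_two,
    Matrix.tail_cons] at h2
  rw [← h2]; ring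

lemma triple {n : ℕ} {c : Fin n → ℂ} {q : Fin n → Fin 3 → ℂ}
    (hev : ∀ u0 u1 u2 : ℂ, u0^2*u1 + u0*u2^2
      = ∑ j, c j * (q j 0 * u0 + q j 1 * u1 + q j 2 * u2)^3)
    (p0 p1 p2 r0 r1 r2 s0 s1 s2 : ℂ) :
    6 * ∑ j, c j * ((q j 0 * p0 + q j 1 * p1 + q j 2 * p2) *
      ((q j 0 * r0 + q j 1 * r1 + q j 2 * r2) *
      (q j 0 * s0 + q j 1 * s1 + q j 2 * s2)))
    = ((p0+r0+s0)^2*(p1+r1+s1) + (p0+r0+s0)*(p2+r2+s2)^2)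
      - ((p0+r0)^2*(p1+r1) + (p0+r0)*(p2+r2)^2)
      - ((p0+s0)^2*(p1+s1) + (p0+s0)*(p2+s2)^2)
      - ((r0+s0)^2*(r1+s1) + (r0+s0)*(r2+s2)^2)
      + (p0^2*p1 + p0*p2^2) + (r0^2*r1 + r0*r2^2) + (s0^2*s1 + s0*s2^2) := by
    rw [hev (p0+r0+s0) (p1+r1+s1) (p2+r2+s2), hev (p0+r0) (p1+r1) (p2+r2),
      hev (p0+s0) (p1+s1) (p2+s2), hev (r0+s0) (r1+s1) (r2+s2),
      hev p0 p1 p2, hev r0 r1 r2, hev s0 s1 s2, Finset.mul_sum]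
    simp only [← Finset.sum_sub_distrib, ← Finset.sum_add_distrib]
    exact Finset.sum_congr rfl fun j _ => by ring


lemma nine {n : ℕ} {c : Fin n → ℂ} {q : Fin n → Fin 3 → ℂ}
    (triple : ∀ (p0 p1 p2 r0 r1 r2 s0 s1 s2 : ℂ),
    6 * ∑ j, c j * ((q j 0 * p0 + q j 1 * p1 + q j 2 * p2) *
      ((q j 0 * r0 + q j 1 * r1 + q j 2 * r2) *
      (q j 0 * s0 + q j 1 * s1 + q j 2 * s2)))
    = ((p0+r0+s0)^2*(p1+r1+s1) + (p0+r0+s0)*(p2+r2+s2)^2)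
      - ((p0+r0)^2*(p1+r1) + (p0+r0)*(p2+r2)^2)
      - ((p0+s0)^2*(p1+s1) + (p0+s0)*(p2+s2)^2)
      - ((r0+s0)^2*(r1+s1) + (r0+s0)*(r2+s2)^2)
      + (p0^2*p1 + p0*p2^2) + (r0^2*r1 + r0*r2^2) + (s0^2*s1 + s0*s2^2)) :
    (∑ j, c j * (q j 0 * (q j 0 * q j 1)) = 1/3) ∧
    (∑ j, c j * (q j 0 * (q j 0 * q j 2)) = 0) ∧
    (∑ j, c j * (q j 0 * (q j 1 * q j 1)) = 0) ∧
    (∑ j, c j * (q j 0 * (q j 1 * q j 2)) = 0) ∧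
    (∑ j, c j * (q j 0 * (q j 2 * q j 2)) = 1/3) ∧
    (∑ j, c j * (q j 1 * (q j 1 * q j 1)) = 0) ∧
    (∑ j, c j * (q j 1 * (q j 1 * q j 2)) = 0) ∧
    (∑ j, c j * (q j 1 * (q j 2 * q j 2)) = 0) ∧
    (∑ j, c j * (q j 2 * (q j 2 * q j 2)) = 0) := by
  have h001 := triple 1 0 0 1 0 0 0 1 0
  have h002 := triple 1 0 0 1 0 0 0 0 1
  have h011 := triple 1 0 0 0 1 0 0 1 0
  have h012 := triple 1 0 0 0 1 0 0 0 1
  have h022 := triple 1 0 0 0 0 1 0 0 1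
  have h111 := triple 0 1 0 0 1 0 0 1 0
  have h112 := triple 0 1 0 0 1 0 0 0 1
  have h122 := triple 0 1 0 0 0 1 0 0 1
  have h222 := triple 0 0 1 0 0 1 0 0 1
  simp only [mul_one, mul_zero, add_zero, zero_add] at h001 h002 h011 h012 h022 h111 h112 h122 h222
  refine ⟨by linear_combination h001/6, by linear_combination h002/6,
    by linear_combination h011/6, by linear_combination h012/6,
    by linear_combination h022/6, by linear_combination h111/6,
    by linear_combination h112/6, by linear_combination h122/6,
    by linear_combination h222/6⟩

lemma core (c : Fin 4 → ℂ) (v : Fin 4 → Fin 3 → ℂ)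
    (e001 : ∑ j, c j * (v j 0 * (v j 0 * v j 1)) = 1/3)
    (e002 : ∑ j, c j * (v j 0 * (v j 0 * v j 2)) = 0)
    (e011 : ∑ j, c j * (v j 0 * (v j 1 * v j 1)) = 0)
    (e012 : ∑ j, c j * (v j 0 * (v j 1 * v j 2)) = 0)
    (e022 : ∑ j, c j * (v j 0 * (v j 2 * v j 2)) = 1/3)
    (e111 : ∑ j, c j * (v j 1 * (v j 1 * v j 1)) = 0)
    (e112 : ∑ j, c j * (v j 1 * (v j 1 * v j 2)) = 0)
    (e122 : ∑ j, c j * (v j 1 * (v j 2 * v j 2)) = 0)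
    (e222 : ∑ j, c j * (v j 2 * (v j 2 * v j 2)) = 0) : False := by
  classical
  obtain ⟨σ, hσ⟩ : ∃ s : ℂ, s = ∑ j, c j * (v j 0 * (v j 0 * v j 0)) := ⟨_, rfl⟩
  let f : (Fin 4 → ℂ) →ₗ[ℂ] (Fin 3 → ℂ) :=
    { toFun := fun u ℓ => ∑ j, u j * v j ℓ
      map_add' := fun u w => by funext ℓ; simp [add_mul, Finset.sum_add_distrib]
      map_smul' := fun s u => by funext ℓ; simp [Finset.mul_sum, mul_assoc]
      }
  have hf : ∀ u ℓ, f u ℓ = ∑ j, u j * v j ℓ := fun _ _ => rfl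
  have hsurj : Function.Surjective f := by
    intro z
    set u : Fin 4 → ℂ := fun j => (3*z 0 - 9*z 1*σ) * (c j * (v j 0 * v j 1))
      + (3*z 2) * (c j * (v j 0 * v j 2)) + (3*z 1) * (c j * (v j 0 * v j 0)) with hu
    have expand : ∀ ℓ : Fin 3, f u ℓ
        = (3*z 0 - 9*z 1*σ) * (∑ j, c j * (v j 0 * (v j 1 * v j ℓ)))
        + (3*z 2) * (∑ j, c j * (v j 0 * (v j 2 * v j ℓ)))
        + (3*z 1) * (∑ j, c j * (v j 0 * (v j 0 * v j ℓ))) := by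
      intro ℓ
      rw [hf, Finset.mul_sum, Finset.mul_sum, Finset.mul_sum,
        ← Finset.sum_add_distrib, ← Finset.sum_add_distrib]
      exact Finset.sum_congr rfl fun j _ => by ring
    have h0 : f u 0 = z 0 := by
      rw [expand 0,
        show (∑ j, c j * (v j 0 * (v j 1 * v j 0))) = ∑ j, c j * (v j 0 * (v j 0 * v j 1))
          from Finset.sum_congr rfl fun j _ => by ring, e001,
        show (∑ j, c j * (v j 0 * (v j 2 * v j 0))) = ∑ j, c j * (v j 0 * (v j 0 * v j 2))
          from Finset.sum_congr rfl fun j _ => by ring, e002, ← hσ]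
      ring
    have h1 : f u 1 = z 1 := by
      rw [expand 1, e011,
        show (∑ j, c j * (v j 0 * (v j 2 * v j 1))) = ∑ j, c j * (v j 0 * (v j 1 * v j 2))
          from Finset.sum_congr rfl fun j _ => by ring, e012, e001]
      ring
    have h2 : f u 2 = z 2 := by
      rw [expand 2, e012, e022, e002]
      ring
    exact ⟨u, by funext ℓ; fin_cases ℓ <;> assumption⟩
  have hker : Module.finrank ℂ (LinearMap.ker f) = 1 := by
    have h1 := LinearMap.finrank_range_add_finrank_ker f
    rw [LinearMap.range_eq_top.mpr hsurj, finrank_top] at h1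
    simp [Module.finrank_fin_fun] at h1 ⊢
    omega
  have memker : ∀ u : Fin 4 → ℂ, (∑ j, u j * v j 0 = 0) → (∑ j, u j * v j 1 = 0) →
      (∑ j, u j * v j 2 = 0) → u ∈ LinearMap.ker f := by
    intro u k0 k1 k2
    rw [LinearMap.mem_ker]; funext ℓ; fin_cases ℓ <;> assumption
  have hu1 : (fun j => c j * (v j 1 * v j 1)) ∈ LinearMap.ker f := by
    apply memker
    · rw [show (∑ j, (c j * (v j 1 * v j 1)) * v j 0) = ∑ j, c j * (v j 0 * (v j 1 * v j 1))
        from Finset.sum_congr rfl fun j _ => by ring]; exact e011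
    · rw [show (∑ j, (c j * (v j 1 * v j 1)) * v j 1) = ∑ j, c j * (v j 1 * (v j 1 * v j 1))
        from Finset.sum_congr rfl fun j _ => by ring]; exact e111
    · rw [show (∑ j, (c j * (v j 1 * v j 1)) * v j 2) = ∑ j, c j * (v j 1 * (v j 1 * v j 2))
        from Finset.sum_congr rfl fun j _ => by ring]; exact e112
  have hu2 : (fun j => c j * (v j 1 * v j 2)) ∈ LinearMap.ker f := by
    apply memker
    · rw [show (∑ j, (c j * (v j 1 * v j 2)) * v j 0) = ∑ j, c j * (v j 0 * (v j 1 * v j 2))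
        from Finset.sum_congr rfl fun j _ => by ring]; exact e012
    · rw [show (∑ j, (c j * (v j 1 * v j 2)) * v j 1) = ∑ j, c j * (v j 1 * (v j 1 * v j 2))
        from Finset.sum_congr rfl fun j _ => by ring]; exact e112
    · rw [show (∑ j, (c j * (v j 1 * v j 2)) * v j 2) = ∑ j, c j * (v j 1 * (v j 2 * v j 2))
        from Finset.sum_congr rfl fun j _ => by ring]; exact e122
  have hu3 : (fun j => c j * (v j 2 * v j 2) - c j * (v j 0 * v j 1)) ∈ LinearMap.ker f := by
    apply memker
    · rw [show (∑ j, (c j * (v j 2 * v j 2) - c j * (v j 0 * v j 1)) * v j 0)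
        = ∑ j, (c j * (v j 0 * (v j 2 * v j 2)) - c j * (v j 0 * (v j 0 * v j 1)))
        from Finset.sum_congr rfl fun j _ => by ring, Finset.sum_sub_distrib, e022, e001]
      ring
    · rw [show (∑ j, (c j * (v j 2 * v j 2) - c j * (v j 0 * v j 1)) * v j 1)
        = ∑ j, (c j * (v j 1 * (v j 2 * v j 2)) - c j * (v j 0 * (v j 1 * v j 1)))
        from Finset.sum_congr rfl fun j _ => by ring, Finset.sum_sub_distrib, e122, e011]
      ring
    · rw [show (∑ j, (c j * (v j 2 * v j 2) - c j * (v j 0 * v j 1)) * v j 2)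
        = ∑ j, (c j * (v j 2 * (v j 2 * v j 2)) - c j * (v j 0 * (v j 1 * v j 2)))
        from Finset.sum_congr rfl fun j _ => by ring, Finset.sum_sub_distrib, e222, e012]
      ring
  have hu1ne : (fun j => c j * (v j 1 * v j 1)) ≠ (0 : Fin 4 → ℂ) := by
    intro h0
    have hz : ∑ j, c j * (v j 0 * (v j 0 * v j 1)) = 0 := by
      apply Finset.sum_eq_zero; intro j _
      have hj : c j * (v j 1 * v j 1) = 0 := congrFun h0 j
      rcases mul_eq_zero.mp hj with h | h
      · rw [h, zero_mul]
      · rw [mul_self_eq_zero.mp h]; ring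
    rw [hz] at e001; norm_num at e001
  have prop : ∀ u : Fin 4 → ℂ, u ∈ LinearMap.ker f → ∃ t : ℂ,
      ∀ j, u j = t * (c j * (v j 1 * v j 1)) := by
    intro u hu
    have hne : (⟨_, hu1⟩ : LinearMap.ker f) ≠ 0 := by
      intro h; exact hu1ne (congrArg Subtype.val h)
    have hs := (finrank_eq_one_iff_of_nonzero (⟨_, hu1⟩ : LinearMap.ker f) hne).mp hker
    have hmem : (⟨u, hu⟩ : LinearMap.ker f) ∈ Submodule.span ℂ
        ({(⟨_, hu1⟩ : LinearMap.ker f)} : Set (LinearMap.ker f)) := hs ▸ Submodule.mem_top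
    obtain ⟨t, ht⟩ := Submodule.mem_span_singleton.mp hmem
    refine ⟨t, fun j => ?_⟩
    have := congrArg Subtype.val ht
    have := congrFun this j
    simpa using this.symm
  obtain ⟨t, ht⟩ := prop _ hu2
  obtain ⟨r, hr⟩ := prop _ hu3
  have final : ∑ j, c j * (v j 0 * (v j 2 * v j 2))
      = t^2 * ∑ j, c j * (v j 0 * (v j 1 * v j 1)) := by
    rw [Finset.mul_sum]
    apply Finset.sum_congr rfl; intro j _
    have h2 : c j * (v j 1 * v j 2) = t * (c j * (v j 1 * v j 1)) := ht j
    have h3 : c j * (v j 2 * v j 2) - c j * (v j 0 * v j 1)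
        = r * (c j * (v j 1 * v j 1)) := hr j
    by_cases hc : c j = 0
    · rw [hc]; ring
    by_cases hb : v j 1 = 0
    · have hd : v j 2 = 0 := by
        rw [hb] at h3
        have hzz : c j * (v j 2 * v j 2) = 0 := by linear_combination h3
        rcases mul_eq_zero.mp hzz with h | h
        · exact absurd h hc
        · exact mul_self_eq_zero.mp h
      rw [hb, hd]; ring
    · have hd : v j 2 = t * v j 1 := by
        have hne : c j * v j 1 ≠ 0 := mul_ne_zero hc hb
        apply mul_left_cancel₀ hne; linear_combination h2
      rw [hd]; ring
  rw [e022, e011, mul_zero] at final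
  norm_num at final

lemma B2 : Fp = ∑ j : Fin 5, (![(1:ℂ)/3, -1/3, 3/2, -3, 3/2] j) •
    lin (![![0,0,1], ![-1,0,1], ![0,1,1], ![-1/3,1,1], ![-2/3,1,1]] j : Fin 3 → ℂ) ^ 3 := by
  apply MvPolynomial.funext
  intro x
  simp only [Fp, map_sum, smul_eval, map_pow, map_mul, map_add, eval_X, eval_lin,
    Fin.sum_univ_five, Matrix.cons_val_zero, Matrix.cons_val_one, Matrix.head_cons,
    Matrix.cons_val_two, Matrix.tail_cons, Matrix.cons_val_three, Matrix.cons_val_four,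
    Matrix.head_fin_const]
  ring

open Complex in
lemma B1 : Fp = ∑ j : Fin 5, (![-(1:ℂ)/3, 1/12, 1/12, -1/12, -1/12] j) •
    lin (![![0,1,0], ![1,1,1], ![1,1,-1], ![1,-1,I], ![1,-1,-I]] j : Fin 3 → ℂ) ^ 3 := by
  apply MvPolynomial.funext
  intro x
  simp only [Fp, map_sum, smul_eval, map_pow, map_mul, map_add, eval_X, eval_lin,
    Fin.sum_univ_five, Matrix.cons_val_zero, Matrix.cons_val_one, Matrix.head_cons,
    Matrix.cons_val_two, Matrix.tail_cons, Matrix.cons_val_three, Matrix.cons_val_four,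
    Matrix.head_fin_const]
  linear_combination (1/2 * (x 0 - x 1) * (x 2)^2) * Complex.I_sq

open Complex in
lemma B3 : Fp = ∑ j : Fin 5, (![-(1:ℂ)/12, 1/30, 1/30, 1/120, 1/120] j) •
    lin (![![1,1,0], ![2,1,1], ![2,1,-1], ![-3,1,2*I], ![-3,1,-(2*I)]] j : Fin 3 → ℂ) ^ 3 := by
  apply MvPolynomial.funext
  intro x
  simp only [Fp, map_sum, smul_eval, map_pow, map_mul, map_add, eval_X, eval_lin,
    Fin.sum_univ_five, Matrix.cons_val_zero, Matrix.cons_val_one, Matrix.head_cons,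
    Matrix.cons_val_two, Matrix.tail_cons, Matrix.cons_val_three, Matrix.cons_val_four,
    Matrix.head_fin_const]
  linear_combination ((3 * x 0 - x 1)/5 * (x 2)^2) * Complex.I_sq

lemma unip {n : ℕ} (t : ℂ) (c : Fin n → ℂ) (L : Fin n → Fin 3 → ℂ)
    (h : Fp = ∑ j, c j • lin (L j) ^ 3) :
    Fp = ∑ j, c j • lin (![L j 0 + t * L j 2 - t^2 * L j 1, L j 1, L j 2 - 2*t*L j 1]) ^ 3 := by
  set φ : MvPolynomial (Fin 3) ℂ →ₐ[ℂ] MvPolynomial (Fin 3) ℂ :=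
    aeval ![X 0, X 1 - C (2*t) * X 2 - C (t^2) * X 0, X 2 + C t * X 0] with hφ
  have hφF : φ Fp = Fp := by
    simp only [Fp, hφ, map_mul, map_add, map_pow, aeval_X, Matrix.cons_val_zero,
      Matrix.cons_val_one, Matrix.head_cons, Matrix.cons_val_two, Matrix.tail_cons,
      map_ofNat, C_mul, C_pow]
    ring
  have hφlin : ∀ v : Fin 3 → ℂ,
      φ (lin v) = lin (![v 0 + t * v 2 - t^2 * v 1, v 1, v 2 - 2*t*v 1]) := by
    intro v
    simp only [lin, Fin.sum_univ_three, hφ, map_add, map_mul, aeval_X, aeval_C,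
      Matrix.cons_val_zero, Matrix.cons_val_one, Matrix.head_cons, Matrix.cons_val_two,
      Matrix.tail_cons, algebraMap_eq, map_sub, C_mul, C_pow, map_ofNat]
    ring
  calc Fp = φ Fp := hφF.symm
    _ = ∑ j, c j • (φ (lin (L j))) ^ 3 := by
        rw [h, map_sum]
        exact Finset.sum_congr rfl fun j _ => by rw [map_smul, map_pow]
    _ = _ := by
        exact Finset.sum_congr rfl fun j _ => by rw [hφlin]

lemma torus {n : ℕ} (l ν : ℂ) (hl : l ≠ 0) (hν : ν ≠ 0) (c : Fin n → ℂ)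
    (L : Fin n → Fin 3 → ℂ) (h : Fp = ∑ j, c j • lin (L j) ^ 3) :
    Fp = ∑ j, ((l * ν^2)⁻¹ * c j) • lin (![l * L j 0, (ν^2/l) * L j 1, ν * L j 2]) ^ 3 := by
  set ψ : MvPolynomial (Fin 3) ℂ →ₐ[ℂ] MvPolynomial (Fin 3) ℂ :=
    aeval ![C l * X 0, C (ν^2/l) * X 1, C ν * X 2] with hψ
  have hψlin : ∀ v : Fin 3 → ℂ,
      ψ (lin v) = lin (![l * v 0, (ν^2/l) * v 1, ν * v 2]) := by
    intro v
    simp only [lin, Fin.sum_univ_three, hψ, map_add, map_mul, aeval_X, aeval_C,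
      Matrix.cons_val_zero, Matrix.cons_val_one, Matrix.head_cons, Matrix.cons_val_two,
      Matrix.tail_cons, algebraMap_eq, C_mul]
    ring
  have hψF : ψ Fp = C (l * ν^2) * Fp := by
    have key : l * ν^2 = l * l * (ν^2/l) := by field_simp
    simp only [Fp, hψ, map_mul, map_add, map_pow, aeval_X, Matrix.cons_val_zero,
      Matrix.cons_val_one, Matrix.head_cons, Matrix.cons_val_two, Matrix.tail_cons]
    have key2 : (C l * C l * C (ν^2/l) : MvPolynomial (Fin 3) ℂ) = C l * C ν^2 := by
      rw [← C_pow, ← C_mul, ← C_mul, ← C_mul]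
      exact congrArg C key.symm
    linear_combination (X 0 ^ 2 * X 1 : MvPolynomial (Fin 3) ℂ) * key2
  have hinv : C ((l * ν^2)⁻¹) * C (l * ν^2) = (1 : MvPolynomial (Fin 3) ℂ) := by
    rw [← C_mul, inv_mul_cancel₀ (by exact mul_ne_zero hl (pow_ne_zero 2 hν)), C_1]
  calc Fp = C ((l * ν^2)⁻¹) * (C (l * ν^2) * Fp) := by rw [← mul_assoc, hinv, one_mul]
    _ = C ((l * ν^2)⁻¹) * ψ Fp := by rw [hψF]
    _ = C ((l * ν^2)⁻¹) * ∑ j, c j • (ψ (lin (L j))) ^ 3 := by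
        rw [h, map_sum]
        congr 1
        exact Finset.sum_congr rfl fun j _ => by rw [map_smul, map_pow]
    _ = _ := by
        rw [Finset.mul_sum]
        refine Finset.sum_congr rfl fun j _ => ?_
        rw [hψlin, smul_eq_C_mul, smul_eq_C_mul, C_mul, mul_assoc]

lemma lin_zero : lin (0 : Fin 3 → ℂ) = 0 := by simp [lin]

lemma lin_smul (u : ℂ) (v : Fin 3 → ℂ) : lin (fun i => u * v i) = C u * lin v := by
  simp [lin, Finset.mul_sum, C_mul, mul_assoc]

lemma hasDecomp_of_combo {n : ℕ} (c : Fin n → ℂ) (L : Fin n → Fin 3 → ℂ)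
    (h : Fp = ∑ j, c j • lin (L j) ^ 3) : HasWaringDecomp 3 Fp n := by
  have hex : ∀ j, ∃ u : ℂ, u ^ 3 = c j := fun j =>
    IsAlgClosed.exists_pow_nat_eq (c j) (n := 3) (by norm_num)
  choose u hu using hex
  refine ⟨fun j i => u j * L j i, ?_⟩
  rw [h]
  refine Finset.sum_congr rfl fun j _ => ?_
  rw [show lin (fun i => u j * L j i) = C (u j) * lin (L j) from lin_smul _ _,
    mul_pow, ← C_pow, hu, smul_eq_C_mul]

lemma decomp_succ {r : ℕ} (h : HasWaringDecomp 3 Fp r) : HasWaringDecomp 3 Fp (r+1) := by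
  obtain ⟨L, hL⟩ := h
  refine ⟨Fin.snoc L 0, ?_⟩
  rw [Fin.sum_univ_castSucc]
  simp only [Fin.snoc_castSucc, Fin.snoc_last, lin_zero]
  rw [← hL]
  norm_num

lemma decomp_mono {r s : ℕ} (hrs : r ≤ s) (h : HasWaringDecomp 3 Fp r) :
    HasWaringDecomp 3 Fp s := by
  induction s, hrs using Nat.le_induction with
  | base => exact h
  | succ n hn ih => exact decomp_succ ih

lemma rank_five (h4 : ¬ HasWaringDecomp 3 Fp 4) (h5 : HasWaringDecomp 3 Fp 5) :
    waringRank 3 Fp = 5 := by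
  refine le_antisymm (Nat.sInf_le h5) (le_csInf ⟨5, h5⟩ ?_)
  intro r hr
  by_contra hlt
  push_neg at hlt
  exact h4 (decomp_mono (by omega) hr)

end FL

namespace FL

lemma no_combo4 (c : Fin 4 → ℂ) (L : Fin 4 → Fin 3 → ℂ)
    (h : Fp = ∑ j, c j • lin (L j) ^ 3) : False := by
  have hev := hev_of h
  obtain ⟨E1, E2, E3, E4, E5, E6, E7, E8, E9⟩ := nine (triple hev)
  exact core c L E1 E2 E3 E4 E5 E6 E7 E8 E9

lemma no_ext (c : Fin 5 → ℂ) (L : Fin 5 → Fin 3 → ℂ) (j0 : Fin 5)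
    (h1 : L j0 1 = 0) (h2 : L j0 2 = 0)
    (h : Fp = ∑ j, c j • lin (L j) ^ 3) : False := by
  have hev := hev_of h
  obtain ⟨E1, E2, E3, E4, E5, E6, E7, E8, E9⟩ := nine (triple hev)
  apply core (fun j => c (j0.succAbove j)) (fun j => L (j0.succAbove j))
  · rw [Fin.sum_univ_succAbove (fun j => c j * (L j 0 * (L j 0 * L j 1))) j0, h1] at E1
    simpa using E1
  · rw [Fin.sum_univ_succAbove (fun j => c j * (L j 0 * (L j 0 * L j 2))) j0, h2] at E2
    simpa using E2
  · rw [Fin.sum_univ_succAbove (fun j => c j * (L j 0 * (L j 1 * L j 1))) j0, h1] at E3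
    simpa using E3
  · rw [Fin.sum_univ_succAbove (fun j => c j * (L j 0 * (L j 1 * L j 2))) j0, h1] at E4
    simpa using E4
  · rw [Fin.sum_univ_succAbove (fun j => c j * (L j 0 * (L j 2 * L j 2))) j0, h2] at E5
    simpa using E5
  · rw [Fin.sum_univ_succAbove (fun j => c j * (L j 1 * (L j 1 * L j 1))) j0, h1] at E6
    simpa using E6
  · rw [Fin.sum_univ_succAbove (fun j => c j * (L j 1 * (L j 1 * L j 2))) j0, h1] at E7
    simpa using E7
  · rw [Fin.sum_univ_succAbove (fun j => c j * (L j 1 * (L j 2 * L j 2))) j0, h1] at E8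
    simpa using E8
  · rw [Fin.sum_univ_succAbove (fun j => c j * (L j 2 * (L j 2 * L j 2))) j0, h2] at E9
    simpa using E9

end FL

namespace FL

lemma mem_of_combo5 (a : Fin 3 → ℂ) (hrk : waringRank 3 Fp = 5)
    (c5 : Fin 5 → ℂ) (L5 : Fin 5 → Fin 3 → ℂ) (j05 : Fin 5)
    (hL : L5 j05 = a) (hF : Fp = ∑ j, c5 j • lin (L5 j) ^ 3) :
    InWaringLocus 3 Fp a := by
  refine ⟨fun j => c5 (Fin.cast hrk j), fun j => L5 (Fin.cast hrk j),
    (finCongr hrk).symm j05, hL, ?_⟩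
  exact hF.trans (Fintype.sum_equiv (finCongr hrk).symm _ _ (fun x => rfl))

lemma combo5_of_mem (a : Fin 3 → ℂ) (hrk : waringRank 3 Fp = 5)
    (hmem : InWaringLocus 3 Fp a) :
    ∃ (c5 : Fin 5 → ℂ) (L5 : Fin 5 → Fin 3 → ℂ) (j05 : Fin 5),
      L5 j05 = a ∧ Fp = ∑ j, c5 j • lin (L5 j) ^ 3 := by
  obtain ⟨c, L, j0, hL, hF⟩ := hmem
  refine ⟨fun j => c (Fin.cast hrk.symm j), fun j => L (Fin.cast hrk.symm j),
    finCongr hrk j0, hL, ?_⟩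
  exact hF.trans (Fintype.sum_equiv (finCongr hrk) _ _ (fun x => rfl))

end FL

theorem forbidden_locus_conic_plus_tangent_line :
    waringRank 3 (X 0 * (X 0 * X 1 + X 2 ^ 2) : MvPolynomial (Fin 3) ℂ) = 5 ∧
    ∀ a : Fin 3 → ℂ, a ≠ 0 →
      (InWaringLocus 3 (X 0 * (X 0 * X 1 + X 2 ^ 2) : MvPolynomial (Fin 3) ℂ) a ↔
        ¬ (a 1 = 0 ∧ a 2 = 0)) := by
  have h5 : HasWaringDecomp 3 FL.Fp 5 := FL.hasDecomp_of_combo _ _ FL.B1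
  have h4 : ¬ HasWaringDecomp 3 FL.Fp 4 := by
    rintro ⟨L, hL⟩
    exact FL.no_combo4 (fun _ => 1) L (by simpa using hL)
  have hrk : waringRank 3 FL.Fp = 5 := FL.rank_five h4 h5
  refine ⟨hrk, fun a ha => ⟨?_, ?_⟩⟩
  · -- membership → not both zero
    intro hmem hand
    obtain ⟨c5, L5, j05, hL, hF⟩ := FL.combo5_of_mem a hrk hmem
    exact FL.no_ext c5 L5 j05 (by rw [hL]; exact hand.1) (by rw [hL]; exact hand.2) hF
  · -- not both zero → membership
    intro hcond
    by_cases ha1 : a 1 = 0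
    · have ha2 : a 2 ≠ 0 := fun h => hcond ⟨ha1, h⟩
      have h1 := FL.torus 1 (a 2) one_ne_zero ha2 _ _ FL.B2
      have h2 := FL.unip (a 0 / a 2) _ _ h1
      refine FL.mem_of_combo5 a hrk _ _ 0 ?_ h2
      funext i
      fin_cases i <;> simp only [Fin.zero_eta, Fin.mk_one, Fin.reduceFinMk]
      · simp only [Matrix.cons_val_zero, Matrix.cons_val_one, Matrix.head_cons,
          Matrix.cons_val_two, Matrix.tail_cons]
        field_simp
        ring
      · simp only [Matrix.cons_val_zero, Matrix.cons_val_one, Matrix.head_cons,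
          Matrix.cons_val_two, Matrix.tail_cons]
        simpa using ha1.symm
      · show _ = a 2
        simp only [Matrix.cons_val_zero, Matrix.cons_val_one, Matrix.head_cons,
          Matrix.cons_val_two, Matrix.tail_cons]
        field_simp
        ring
    · by_cases hD : 4 * a 0 * a 1 + a 2 ^ 2 = 0
      · obtain ⟨ν, hν⟩ := IsAlgClosed.exists_pow_nat_eq (a 1) (n := 2) (by norm_num)
        have hν0 : ν ≠ 0 := fun h => ha1 (by rw [← hν, h]; ring)
        have h1 := FL.torus 1 ν one_ne_zero hν0 _ _ FL.B1
        have h2 := FL.unip (-(a 2) / (2 * a 1)) _ _ h1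
        refine FL.mem_of_combo5 a hrk _ _ 0 ?_ h2
        funext i
        fin_cases i <;> simp only [Fin.zero_eta, Fin.mk_one, Fin.reduceFinMk]
        · show _ = a 0
          simp only [Matrix.cons_val_zero, Matrix.cons_val_one, Matrix.head_cons,
          Matrix.cons_val_two, Matrix.tail_cons]
          rw [hν]
          field_simp
          linear_combination (-1 : ℂ) * hD
        · simp only [Matrix.cons_val_zero, Matrix.cons_val_one, Matrix.head_cons,
          Matrix.cons_val_two, Matrix.tail_cons]
          rw [hν]
          field_simp
        · show _ = a 2
          simp only [Matrix.cons_val_zero, Matrix.cons_val_one, Matrix.head_cons,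
          Matrix.cons_val_two, Matrix.tail_cons]
          rw [hν]
          field_simp
          ring
      · obtain ⟨ν, hν⟩ := IsAlgClosed.exists_pow_nat_eq
          ((4 * a 0 * a 1 + a 2 ^ 2) / 4) (n := 2) (by norm_num)
        have hν0 : ν ≠ 0 := by
          intro h
          rw [h] at hν
          exact hD (by linear_combination -4 * hν)
        have hl0 : (4 * a 0 * a 1 + a 2 ^ 2) / (4 * a 1) ≠ 0 :=
          div_ne_zero hD (by simpa using ha1)
        have h1 := FL.torus ((4 * a 0 * a 1 + a 2 ^ 2) / (4 * a 1)) ν hl0 hν0 _ _ FL.B3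
        have h2 := FL.unip (-(a 2) / (2 * a 1)) _ _ h1
        refine FL.mem_of_combo5 a hrk _ _ 0 ?_ h2
        funext i
        fin_cases i <;> simp only [Fin.zero_eta, Fin.mk_one, Fin.reduceFinMk]
        · simp only [Matrix.cons_val_zero, Matrix.cons_val_one, Matrix.head_cons,
          Matrix.cons_val_two, Matrix.tail_cons]
          rw [hν]
          field_simp
          ring
        · simp only [Matrix.cons_val_zero, Matrix.cons_val_one, Matrix.head_cons,
          Matrix.cons_val_two, Matrix.tail_cons]
          rw [hν]
          field_simp
        · show _ = a 2
          simp only [Matrix.cons_val_zero, Matrix.cons_val_one, Matrix.head_cons,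
          Matrix.cons_val_two, Matrix.tail_cons]
          rw [hν]
          field_simp
          have hD' : a 1 * 4 * a 0 + a 2 ^ 2 ≠ 0 := fun h => hD (by linear_combination h)
          rw [mul_div_assoc, div_self hD']
          ring

end
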